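/- arXiv:1807.06646 — 4 statements merged into one kernel-verified Lean document; each statement's English description precedes it below -/
import Mathlib

section
/- Let γ>1 and let U₀=(u₀,0,p₀,ρ₀) be a state with ρ₀>0, p₀>0 and u₀>c₀, where c₀=√(γp₀/ρ₀). Then r̃₁(U₀)·∇λ₁(U₀) = r̃₄(U₀)·∇λ₄(U₀) and this common value is strictly positive; consequently the normalization factors κ_j(U₀) := 1/(r̃_j(U₀)·∇λ_j(U₀)) (chosen so that the normalized eigenvectors r_j = κ_j r̃_j satisfy r_j·∇λ_j = 1) satisfy κ₁(U₀) = κ₄(U₀) > 0. Moreover, there is an open neighborhood of U₀ on which r̃_j(U)·∇λ_j(U) > 0 for j=1,4, so κ₁ and κ₄ are positive on that neighborhood. -/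
noncomputable section

/-- Sonic speed `c = √(γ p / ρ)` at a state `U = (u, v, p, ρ)`. -/
def cs (γ : ℝ) (U : Fin 4 → ℝ) : ℝ := Real.sqrt (γ * U 2 / U 3)

/-- First characteristic speed `λ₁(U)` of the steady Euler system in the `x`-direction. -/
def lam1 (γ : ℝ) (U : Fin 4 → ℝ) : ℝ :=
  (U 0 * U 1 - cs γ U * Real.sqrt (U 0 ^ 2 + U 1 ^ 2 - cs γ U ^ 2)) /
    (U 0 ^ 2 - cs γ U ^ 2)

/-- Fourth characteristic speed `λ₄(U)` of the steady Euler system in the `x`-direction. -/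
def lam4 (γ : ℝ) (U : Fin 4 → ℝ) : ℝ :=
  (U 0 * U 1 + cs γ U * Real.sqrt (U 0 ^ 2 + U 1 ^ 2 - cs γ U ^ 2)) /
    (U 0 ^ 2 - cs γ U ^ 2)

/-- Unnormalized eigenvector `r̃₁(U) = (-λ₁, 1, ρ(λ₁u - v), ρ(λ₁u - v)/c²)`. -/
def rt1 (γ : ℝ) (U : Fin 4 → ℝ) : Fin 4 → ℝ :=
  ![-(lam1 γ U), 1, U 3 * (lam1 γ U * U 0 - U 1),
    U 3 * (lam1 γ U * U 0 - U 1) / cs γ U ^ 2]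

/-- Unnormalized eigenvector `r̃₄(U) = (-λ₄, 1, ρ(λ₄u - v), ρ(λ₄u - v)/c²)`. -/
def rt4 (γ : ℝ) (U : Fin 4 → ℝ) : Fin 4 → ℝ :=
  ![-(lam4 γ U), 1, U 3 * (lam4 γ U * U 0 - U 1),
    U 3 * (lam4 γ U * U 0 - U 1) / cs γ U ^ 2]

-- auxiliary section (to be inserted before the theorem)
def fgen (γ σ : ℝ) (U : Fin 4 → ℝ) : ℝ :=
  (U 0 * U 1 + σ * (Real.sqrt (γ * U 2 / U 3) *
      Real.sqrt (U 0 ^ 2 + U 1 ^ 2 - γ * U 2 / U 3))) / (U 0 ^ 2 - γ * U 2 / U 3)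

lemma hasDerivAt_line (γ σ u p ρ r0 r1 r2 r3 : ℝ) (hγ : 0 < γ) (hρ : 0 < ρ) (hp : 0 < p)
    (hD : γ * p / ρ < u ^ 2) :
    HasDerivAt (fun t : ℝ => fgen γ σ (![u, 0, p, ρ] + t • ![r0, r1, r2, r3]))
      (((u * r1 + σ * (Real.sqrt (γ*p/ρ) * ((2*u*r0 - (γ*r2*ρ - γ*p*r3)/ρ^2) / (2 * Real.sqrt (u^2 - γ*p/ρ)))
            + Real.sqrt (u^2 - γ*p/ρ) * (((γ*r2*ρ - γ*p*r3)/ρ^2) / (2 * Real.sqrt (γ*p/ρ))))) * (u^2 - γ*p/ρ)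
          - σ * (Real.sqrt (γ*p/ρ) * Real.sqrt (u^2 - γ*p/ρ)) * (2*u*r0 - (γ*r2*ρ - γ*p*r3)/ρ^2))
        / (u^2 - γ*p/ρ)^2) 0 := by
  have hρ' : ρ ≠ 0 := hρ.ne'
  have hgp : 0 < γ * p / ρ := by positivity
  have hDpos : 0 < u ^ 2 - γ * p / ρ := by linarith
  have hfun : (fun t : ℝ => fgen γ σ (![u,0,p,ρ] + t • ![r0,r1,r2,r3]))
      = fun t : ℝ => ((u + t*r0)*(0 + t*r1) + σ*(Real.sqrt (γ*(p+t*r2)/(ρ+t*r3)) *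
          Real.sqrt ((u+t*r0)^2 + (0+t*r1)^2 - γ*(p+t*r2)/(ρ+t*r3))))
          /((u+t*r0)^2 - γ*(p+t*r2)/(ρ+t*r3)) := by
    funext t
    simp [fgen, Pi.add_apply, Pi.smul_apply, smul_eq_mul, mul_comm]
  rw [hfun]
  have hx : ∀ a b : ℝ, HasDerivAt (fun t : ℝ => a + t * b) b 0 := fun a b => by
    simpa using ((hasDerivAt_id (0:ℝ)).mul_const b).const_add a
  have hm : HasDerivAt (fun t : ℝ => γ*(p+t*r2)/(ρ+t*r3)) ((γ*r2*ρ - γ*p*r3)/ρ^2) 0 := by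
    have h := ((hx p r2).const_mul γ).div (hx ρ r3) (by simpa using hρ')
    simpa [Pi.div_def] using h
  have hcs : HasDerivAt (fun t : ℝ => Real.sqrt (γ*(p+t*r2)/(ρ+t*r3)))
      (((γ*r2*ρ - γ*p*r3)/ρ^2)/(2*Real.sqrt (γ*p/ρ))) 0 := by
    have h := hm.sqrt (by simpa using hgp.ne')
    simpa using h
  have hw : HasDerivAt (fun t : ℝ => (u+t*r0)^2 + (0+t*r1)^2 - γ*(p+t*r2)/(ρ+t*r3))
      (2*u*r0 - (γ*r2*ρ - γ*p*r3)/ρ^2) 0 := by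
    have h := (((hx u r0).pow 2).add ((hx 0 r1).pow 2)).sub hm
    exact h.congr_deriv (by norm_num)
  have hW : HasDerivAt (fun t : ℝ => Real.sqrt ((u+t*r0)^2 + (0+t*r1)^2 - γ*(p+t*r2)/(ρ+t*r3)))
      ((2*u*r0 - (γ*r2*ρ - γ*p*r3)/ρ^2) / (2 * Real.sqrt (u^2 - γ*p/ρ))) 0 := by
    have h := hw.sqrt (by simpa using hDpos.ne')
    simpa using h
  have hden : HasDerivAt (fun t : ℝ => (u+t*r0)^2 - γ*(p+t*r2)/(ρ+t*r3))
      (2*u*r0 - (γ*r2*ρ - γ*p*r3)/ρ^2) 0 := by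
    have h := ((hx u r0).pow 2).sub hm
    exact h.congr_deriv (by norm_num)
  have hnum : HasDerivAt (fun t : ℝ => (u + t*r0)*(0 + t*r1) + σ*(Real.sqrt (γ*(p+t*r2)/(ρ+t*r3)) *
          Real.sqrt ((u+t*r0)^2 + (0+t*r1)^2 - γ*(p+t*r2)/(ρ+t*r3))))
      (u * r1 + σ * (Real.sqrt (γ*p/ρ) * ((2*u*r0 - (γ*r2*ρ - γ*p*r3)/ρ^2) / (2 * Real.sqrt (u^2 - γ*p/ρ)))
            + Real.sqrt (u^2 - γ*p/ρ) * (((γ*r2*ρ - γ*p*r3)/ρ^2) / (2 * Real.sqrt (γ*p/ρ))))) 0 := by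
    have h := ((hx u r0).mul (hx 0 r1)).add ((hcs.mul hW).const_mul σ)
    exact h.congr_deriv (by norm_num; exact Or.inl (by ring))
  have h := hnum.div hden (by simpa using hDpos.ne')
  exact h.congr_deriv (by norm_num)

lemma contDiffAt_fgen (γ σ : ℝ) (U : Fin 4 → ℝ) (hγ : 0 < γ) (h2 : 0 < U 2) (h3 : 0 < U 3)
    (hd : γ * U 2 / U 3 < U 0 ^ 2) :
    ContDiffAt ℝ 1 (fgen γ σ) U := by
  have c0 : ContDiffAt ℝ 1 (fun U : Fin 4 → ℝ => U 0) U :=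
    (ContinuousLinearMap.proj (R := ℝ) (φ := fun _ : Fin 4 => ℝ) 0).contDiff.contDiffAt
  have c1 : ContDiffAt ℝ 1 (fun U : Fin 4 → ℝ => U 1) U :=
    (ContinuousLinearMap.proj (R := ℝ) (φ := fun _ : Fin 4 => ℝ) 1).contDiff.contDiffAt
  have c2 : ContDiffAt ℝ 1 (fun U : Fin 4 → ℝ => U 2) U :=
    (ContinuousLinearMap.proj (R := ℝ) (φ := fun _ : Fin 4 => ℝ) 2).contDiff.contDiffAt
  have c3 : ContDiffAt ℝ 1 (fun U : Fin 4 → ℝ => U 3) U :=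
    (ContinuousLinearMap.proj (R := ℝ) (φ := fun _ : Fin 4 => ℝ) 3).contDiff.contDiffAt
  have hgp : 0 < γ * U 2 / U 3 := by positivity
  have hw : (0:ℝ) < U 0 ^ 2 + U 1 ^ 2 - γ * U 2 / U 3 := by nlinarith [sq_nonneg (U 1)]
  have hq : ContDiffAt ℝ 1 (fun U : Fin 4 → ℝ => γ * U 2 / U 3) U :=
    (contDiffAt_const.mul c2).div c3 h3.ne'
  have hcs : ContDiffAt ℝ 1 (fun U : Fin 4 → ℝ => Real.sqrt (γ * U 2 / U 3)) U :=
    (Real.contDiffAt_sqrt hgp.ne').comp U hq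
  have hwf : ContDiffAt ℝ 1 (fun U : Fin 4 → ℝ => U 0 ^ 2 + U 1 ^ 2 - γ * U 2 / U 3) U :=
    ((c0.pow 2).add (c1.pow 2)).sub hq
  have hW : ContDiffAt ℝ 1
      (fun U : Fin 4 → ℝ => Real.sqrt (U 0 ^ 2 + U 1 ^ 2 - γ * U 2 / U 3)) U :=
    (Real.contDiffAt_sqrt hw.ne').comp U hwf
  have hnum : ContDiffAt ℝ 1 (fun U : Fin 4 → ℝ => U 0 * U 1 + σ * (Real.sqrt (γ * U 2 / U 3) *
      Real.sqrt (U 0 ^ 2 + U 1 ^ 2 - γ * U 2 / U 3))) U :=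
    (c0.mul c1).add (contDiffAt_const.mul (hcs.mul hW))
  have hden : ContDiffAt ℝ 1 (fun U : Fin 4 → ℝ => U 0 ^ 2 - γ * U 2 / U 3) U :=
    (c0.pow 2).sub hq
  exact hnum.div hden (by nlinarith)

lemma bigval (γ σ u p ρ c W : ℝ) (hρ : 0 < ρ)
    (hσ : σ = 1 ∨ σ = -1)
    (hc2 : c ^ 2 = γ * p / ρ) (hc0 : 0 < c) (hW2 : W ^ 2 = u ^ 2 - γ * p / ρ) (hW0 : 0 < W) :
    ((u * 1 + σ * (c * ((2 * u * (-(σ * (c * W) / (u ^ 2 - γ * p / ρ)))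
          - (γ * (ρ * (σ * (c * W) / (u ^ 2 - γ * p / ρ) * u)) * ρ
             - γ * p * (ρ * (σ * (c * W) / (u ^ 2 - γ * p / ρ) * u) / c ^ 2)) / ρ ^ 2) / (2 * W))
        + W * (((γ * (ρ * (σ * (c * W) / (u ^ 2 - γ * p / ρ) * u)) * ρ
             - γ * p * (ρ * (σ * (c * W) / (u ^ 2 - γ * p / ρ) * u) / c ^ 2)) / ρ ^ 2) / (2 * c))))
        * (u ^ 2 - γ * p / ρ)
      - σ * (c * W) * (2 * u * (-(σ * (c * W) / (u ^ 2 - γ * p / ρ)))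
          - (γ * (ρ * (σ * (c * W) / (u ^ 2 - γ * p / ρ) * u)) * ρ
             - γ * p * (ρ * (σ * (c * W) / (u ^ 2 - γ * p / ρ) * u) / c ^ 2)) / ρ ^ 2))
      / (u ^ 2 - γ * p / ρ) ^ 2
    = u / (u ^ 2 - γ * p / ρ) + u * (γ * p / ρ + (γ - 1) * u ^ 2 / 2) / (u ^ 2 - γ * p / ρ) ^ 2 := by
  have hD : 0 < u ^ 2 - γ * p / ρ := by nlinarith [pow_pos hW0 2]
  have hρ' : ρ ≠ 0 := hρ.ne'
  have hc' : c ≠ 0 := hc0.ne'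
  have hW' : W ≠ 0 := hW0.ne'
  have hD' : u ^ 2 - γ * p / ρ ≠ 0 := hD.ne'
  have hgp : γ * p / ρ = c ^ 2 := hc2.symm
  rw [hgp]
  have hu2 : u ^ 2 = W ^ 2 + c ^ 2 := by rw [hW2, hgp]; ring
  rw [hu2]
  have hD2' : W ^ 2 + c ^ 2 - c ^ 2 ≠ 0 := by simpa using pow_ne_zero 2 hW'
  have hcp : c ^ 2 * ρ = γ * p := by
    rw [hc2]; field_simp
  rcases hσ with h | h <;> subst h <;> field_simp <;>
    linear_combination (u*W^2*c^2 + u*W^4) * hcp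

lemma fgen_fderiv_eval (γ σ u p ρ r0 r1 r2 r3 : ℝ) (hγ : 0 < γ) (hρ : 0 < ρ) (hp : 0 < p)
    (hD : γ * p / ρ < u ^ 2) :
    fderiv ℝ (fgen γ σ) ![u,0,p,ρ] ![r0,r1,r2,r3] =
      ((u * r1 + σ * (Real.sqrt (γ*p/ρ) * ((2*u*r0 - (γ*r2*ρ - γ*p*r3)/ρ^2) / (2 * Real.sqrt (u^2 - γ*p/ρ)))
            + Real.sqrt (u^2 - γ*p/ρ) * (((γ*r2*ρ - γ*p*r3)/ρ^2) / (2 * Real.sqrt (γ*p/ρ))))) * (u^2 - γ*p/ρ)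
          - σ * (Real.sqrt (γ*p/ρ) * Real.sqrt (u^2 - γ*p/ρ)) * (2*u*r0 - (γ*r2*ρ - γ*p*r3)/ρ^2))
        / (u^2 - γ*p/ρ)^2 := by
  have hcd := contDiffAt_fgen γ σ ![u,0,p,ρ] hγ (by simpa using hp) (by simpa using hρ)
    (by simpa using hD)
  have hdiff : DifferentiableAt ℝ (fgen γ σ) ![u,0,p,ρ] := hcd.differentiableAt one_ne_zero
  have hHF := hdiff.hasFDerivAt
  have hline : HasDerivAt (fun t : ℝ => (![u,0,p,ρ] : Fin 4 → ℝ) + t • ![r0,r1,r2,r3])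
      (![r0,r1,r2,r3]) 0 := by
    simpa using ((hasDerivAt_id (0:ℝ)).smul_const (![r0,r1,r2,r3] : Fin 4 → ℝ)).const_add
      (![u,0,p,ρ] : Fin 4 → ℝ)
  have hHF' : HasFDerivAt (fgen γ σ) (fderiv ℝ (fgen γ σ) ![u,0,p,ρ])
      ((fun t : ℝ => (![u,0,p,ρ] : Fin 4 → ℝ) + t • ![r0,r1,r2,r3]) 0) := by
    simpa using hHF
  have hd1 : HasDerivAt (fun t : ℝ => fgen γ σ ((![u,0,p,ρ] : Fin 4 → ℝ) + t • ![r0,r1,r2,r3]))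
      (fderiv ℝ (fgen γ σ) ![u,0,p,ρ] ![r0,r1,r2,r3]) 0 := by
      have := hHF'.comp_hasDerivAt 0 hline; exact this
  exact hd1.unique (hasDerivAt_line γ σ u p ρ r0 r1 r2 r3 hγ hρ hp hD)

lemma lam1_eq_fgen (γ : ℝ) (U : Fin 4 → ℝ) (h2 : 0 < U 2) (h3 : 0 < U 3) (hγ : 0 < γ) :
    lam1 γ U = fgen γ (-1) U := by
  have h : 0 ≤ γ * U 2 / U 3 := by positivity
  simp only [lam1, cs, fgen, Real.sq_sqrt h]
  ring

lemma lam4_eq_fgen (γ : ℝ) (U : Fin 4 → ℝ) (h2 : 0 < U 2) (h3 : 0 < U 3) (hγ : 0 < γ) :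
    lam4 γ U = fgen γ 1 U := by
  have h : 0 ≤ γ * U 2 / U 3 := by positivity
  simp only [lam4, cs, fgen, Real.sq_sqrt h]
  ring

/-- At an unperturbed state `U₀ = (u₀, 0, p₀, ρ₀)` with `u₀ > c₀`, one has
`r̃₁ · ∇λ₁ = r̃₄ · ∇λ₄ > 0`, hence the normalization factors satisfy
`κ₁(U₀) = κ₄(U₀) > 0`; moreover this positivity persists on a neighborhood of `U₀`. -/
theorem kappa_eq_pos
    (γ u₀ p₀ ρ₀ : ℝ) (hγ : 1 < γ) (hρ : 0 < ρ₀) (hp : 0 < p₀)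
    (c₀ : ℝ) (hc : c₀ = Real.sqrt (γ * p₀ / ρ₀)) (hsup : c₀ < u₀)
    (U₀ : Fin 4 → ℝ) (hU : U₀ = ![u₀, 0, p₀, ρ₀]) :
    fderiv ℝ (lam1 γ) U₀ (rt1 γ U₀) = fderiv ℝ (lam4 γ) U₀ (rt4 γ U₀) ∧
    0 < fderiv ℝ (lam1 γ) U₀ (rt1 γ U₀) ∧
    (1 / fderiv ℝ (lam1 γ) U₀ (rt1 γ U₀) = 1 / fderiv ℝ (lam4 γ) U₀ (rt4 γ U₀) ∧
      0 < 1 / fderiv ℝ (lam1 γ) U₀ (rt1 γ U₀)) ∧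
    ∃ s : Set (Fin 4 → ℝ), IsOpen s ∧ U₀ ∈ s ∧ ∀ U ∈ s,
      0 < fderiv ℝ (lam1 γ) U (rt1 γ U) ∧ 0 < fderiv ℝ (lam4 γ) U (rt4 γ U) := by
  subst hU
  have hγ0 : 0 < γ := lt_trans one_pos hγ
  have hgp : 0 < γ * p₀ / ρ₀ := by positivity
  have hc0 : 0 < c₀ := by rw [hc]; exact Real.sqrt_pos.2 hgp
  have hc2 : c₀ ^ 2 = γ * p₀ / ρ₀ := by rw [hc]; exact Real.sq_sqrt hgp.le
  have hu0 : 0 < u₀ := lt_trans hc0 hsup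
  have hDlt : γ * p₀ / ρ₀ < u₀ ^ 2 := by nlinarith
  have hD : 0 < u₀ ^ 2 - γ * p₀ / ρ₀ := by linarith
  have hW2 : Real.sqrt (u₀ ^ 2 - γ * p₀ / ρ₀) ^ 2 = u₀ ^ 2 - γ * p₀ / ρ₀ := Real.sq_sqrt hD.le
  have hW0 : 0 < Real.sqrt (u₀ ^ 2 - γ * p₀ / ρ₀) := Real.sqrt_pos.2 hD
  -- values at the base state
  have hcsU : cs γ ![u₀, 0, p₀, ρ₀] = c₀ := by
    simp only [cs, Matrix.cons_val_two, Matrix.cons_val_three, Matrix.tail_cons, Matrix.head_cons]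
    exact hc.symm
  have hlam1U : lam1 γ ![u₀, 0, p₀, ρ₀]
      = -1 * (c₀ * Real.sqrt (u₀ ^ 2 - γ * p₀ / ρ₀)) / (u₀ ^ 2 - γ * p₀ / ρ₀) := by
    simp only [lam1, hcsU, hc2, Matrix.cons_val_zero, Matrix.cons_val_one, Matrix.head_cons]
    norm_num
  have hlam4U : lam4 γ ![u₀, 0, p₀, ρ₀]
      = 1 * (c₀ * Real.sqrt (u₀ ^ 2 - γ * p₀ / ρ₀)) / (u₀ ^ 2 - γ * p₀ / ρ₀) := by
    simp only [lam4, hcsU, hc2, Matrix.cons_val_zero, Matrix.cons_val_one, Matrix.head_cons]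
    norm_num
  have hrt1 : rt1 γ ![u₀, 0, p₀, ρ₀] =
      ![-(-1 * (c₀ * Real.sqrt (u₀ ^ 2 - γ * p₀ / ρ₀)) / (u₀ ^ 2 - γ * p₀ / ρ₀)), 1,
        ρ₀ * (-1 * (c₀ * Real.sqrt (u₀ ^ 2 - γ * p₀ / ρ₀)) / (u₀ ^ 2 - γ * p₀ / ρ₀) * u₀),
        ρ₀ * (-1 * (c₀ * Real.sqrt (u₀ ^ 2 - γ * p₀ / ρ₀)) / (u₀ ^ 2 - γ * p₀ / ρ₀) * u₀) / c₀ ^ 2] := by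
    funext i
    fin_cases i <;>
      simp [rt1, hlam1U, hcsU]
  have hrt4 : rt4 γ ![u₀, 0, p₀, ρ₀] =
      ![-(1 * (c₀ * Real.sqrt (u₀ ^ 2 - γ * p₀ / ρ₀)) / (u₀ ^ 2 - γ * p₀ / ρ₀)), 1,
        ρ₀ * (1 * (c₀ * Real.sqrt (u₀ ^ 2 - γ * p₀ / ρ₀)) / (u₀ ^ 2 - γ * p₀ / ρ₀) * u₀),
        ρ₀ * (1 * (c₀ * Real.sqrt (u₀ ^ 2 - γ * p₀ / ρ₀)) / (u₀ ^ 2 - γ * p₀ / ρ₀) * u₀) / c₀ ^ 2] := by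
    funext i
    fin_cases i <;>
      simp [rt4, hlam4U, hcsU]
  -- fderiv of fgen evaluated on the eigenvectors
  have hfe1 : fderiv ℝ (fgen γ (-1)) ![u₀, 0, p₀, ρ₀] (rt1 γ ![u₀, 0, p₀, ρ₀])
      = u₀ / (u₀ ^ 2 - γ * p₀ / ρ₀)
        + u₀ * (γ * p₀ / ρ₀ + (γ - 1) * u₀ ^ 2 / 2) / (u₀ ^ 2 - γ * p₀ / ρ₀) ^ 2 := by
    rw [hrt1, fgen_fderiv_eval γ (-1) u₀ p₀ ρ₀ _ _ _ _ hγ0 hρ hp hDlt]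
    have := bigval γ (-1) u₀ p₀ ρ₀ c₀ (Real.sqrt (u₀ ^ 2 - γ * p₀ / ρ₀)) hρ (Or.inr rfl)
      hc2 hc0 hW2 hW0
    rw [hc] at this ⊢
    convert this using 2 <;> ring
  have hfe4 : fderiv ℝ (fgen γ 1) ![u₀, 0, p₀, ρ₀] (rt4 γ ![u₀, 0, p₀, ρ₀])
      = u₀ / (u₀ ^ 2 - γ * p₀ / ρ₀)
        + u₀ * (γ * p₀ / ρ₀ + (γ - 1) * u₀ ^ 2 / 2) / (u₀ ^ 2 - γ * p₀ / ρ₀) ^ 2 := by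
    rw [hrt4, fgen_fderiv_eval γ 1 u₀ p₀ ρ₀ _ _ _ _ hγ0 hρ hp hDlt]
    have := bigval γ 1 u₀ p₀ ρ₀ c₀ (Real.sqrt (u₀ ^ 2 - γ * p₀ / ρ₀)) hρ (Or.inl rfl)
      hc2 hc0 hW2 hW0
    rw [hc] at this ⊢
    convert this using 2 <;> ring
  -- transfer to lam1 / lam4
  have hs'open : IsOpen {U : Fin 4 → ℝ | 0 < U 2 ∧ 0 < U 3} :=
    (isOpen_lt continuous_const (continuous_apply 2)).and
      (isOpen_lt continuous_const (continuous_apply 3))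
  have hVmem' : (![u₀, 0, p₀, ρ₀] : Fin 4 → ℝ) ∈ {U : Fin 4 → ℝ | 0 < U 2 ∧ 0 < U 3} := by
    constructor <;> simpa using (by assumption : _)
  have hev1 : lam1 γ =ᶠ[nhds (![u₀, 0, p₀, ρ₀] : Fin 4 → ℝ)] fgen γ (-1) :=
    Filter.eventuallyEq_of_mem (hs'open.mem_nhds hVmem')
      (fun U hU => lam1_eq_fgen γ U hU.1 hU.2 hγ0)
  have hev4 : lam4 γ =ᶠ[nhds (![u₀, 0, p₀, ρ₀] : Fin 4 → ℝ)] fgen γ 1 :=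
    Filter.eventuallyEq_of_mem (hs'open.mem_nhds hVmem')
      (fun U hU => lam4_eq_fgen γ U hU.1 hU.2 hγ0)
  have hv1 : fderiv ℝ (lam1 γ) ![u₀, 0, p₀, ρ₀] (rt1 γ ![u₀, 0, p₀, ρ₀])
      = u₀ / (u₀ ^ 2 - γ * p₀ / ρ₀)
        + u₀ * (γ * p₀ / ρ₀ + (γ - 1) * u₀ ^ 2 / 2) / (u₀ ^ 2 - γ * p₀ / ρ₀) ^ 2 := by
    rw [hev1.fderiv_eq]; exact hfe1
  have hv4 : fderiv ℝ (lam4 γ) ![u₀, 0, p₀, ρ₀] (rt4 γ ![u₀, 0, p₀, ρ₀])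
      = u₀ / (u₀ ^ 2 - γ * p₀ / ρ₀)
        + u₀ * (γ * p₀ / ρ₀ + (γ - 1) * u₀ ^ 2 / 2) / (u₀ ^ 2 - γ * p₀ / ρ₀) ^ 2 := by
    rw [hev4.fderiv_eq]; exact hfe4
  have hApos : 0 < u₀ / (u₀ ^ 2 - γ * p₀ / ρ₀)
      + u₀ * (γ * p₀ / ρ₀ + (γ - 1) * u₀ ^ 2 / 2) / (u₀ ^ 2 - γ * p₀ / ρ₀) ^ 2 := by
    have h1 : 0 < u₀ / (u₀ ^ 2 - γ * p₀ / ρ₀) := div_pos hu0 hD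
    have h2 : 0 < u₀ * (γ * p₀ / ρ₀ + (γ - 1) * u₀ ^ 2 / 2) / (u₀ ^ 2 - γ * p₀ / ρ₀) ^ 2 := by
      apply div_pos
      · have hgt : 0 < γ * p₀ / ρ₀ + (γ - 1) * u₀ ^ 2 / 2 := by
          have h3 : 0 < (γ - 1) * u₀ ^ 2 := mul_pos (by linarith) (pow_pos hu0 2)
          linarith
        exact mul_pos hu0 hgt
      · exact pow_pos hD 2
    linarith
  refine ⟨by rw [hv1, hv4], by rw [hv1]; exact hApos, ⟨by rw [hv1, hv4], ?_⟩, ?_⟩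
  · rw [hv1]
    exact one_div_pos.2 hApos
  -- neighborhood of positivity
  · have hSopen : IsOpen {U : Fin 4 → ℝ | 0 < U 2 ∧ 0 < U 3 ∧ γ * U 2 < U 0 ^ 2 * U 3} :=
      (isOpen_lt continuous_const (continuous_apply 2)).and
        ((isOpen_lt continuous_const (continuous_apply 3)).and
          (isOpen_lt (by fun_prop) (by fun_prop)))
    have hVS : (![u₀, 0, p₀, ρ₀] : Fin 4 → ℝ) ∈
        {U : Fin 4 → ℝ | 0 < U 2 ∧ 0 < U 3 ∧ γ * U 2 < U 0 ^ 2 * U 3} := by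
      refine ⟨by simpa using hp, by simpa using hρ, ?_⟩
      simpa using (div_lt_iff₀ hρ).1 hDlt
    have hdlt : ∀ U ∈ {U : Fin 4 → ℝ | 0 < U 2 ∧ 0 < U 3 ∧ γ * U 2 < U 0 ^ 2 * U 3},
        γ * U 2 / U 3 < U 0 ^ 2 := fun U hU => (div_lt_iff₀ hU.2.1).2 hU.2.2
    have hcdOn : ∀ σ : ℝ, ContDiffOn ℝ 1 (fgen γ σ)
        {U : Fin 4 → ℝ | 0 < U 2 ∧ 0 < U 3 ∧ γ * U 2 < U 0 ^ 2 * U 3} := fun σ U hU =>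
      (contDiffAt_fgen γ σ U hγ0 hU.1 hU.2.1 (hdlt U hU)).contDiffWithinAt
    have hfc : ∀ σ : ℝ, ContinuousOn (fderiv ℝ (fgen γ σ))
        {U : Fin 4 → ℝ | 0 < U 2 ∧ 0 < U 3 ∧ γ * U 2 < U 0 ^ 2 * U 3} := fun σ =>
      (hcdOn σ).continuousOn_fderiv_of_isOpen hSopen le_rfl
    have hlam1c : ContinuousOn (lam1 γ)
        {U : Fin 4 → ℝ | 0 < U 2 ∧ 0 < U 3 ∧ γ * U 2 < U 0 ^ 2 * U 3} :=
      ((hcdOn (-1)).continuousOn).congr (fun U hU => lam1_eq_fgen γ U hU.1 hU.2.1 hγ0)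
    have hlam4c : ContinuousOn (lam4 γ)
        {U : Fin 4 → ℝ | 0 < U 2 ∧ 0 < U 3 ∧ γ * U 2 < U 0 ^ 2 * U 3} :=
      ((hcdOn 1).continuousOn).congr (fun U hU => lam4_eq_fgen γ U hU.1 hU.2.1 hγ0)
    have hcsc : ContinuousOn (fun U : Fin 4 → ℝ => cs γ U)
        {U : Fin 4 → ℝ | 0 < U 2 ∧ 0 < U 3 ∧ γ * U 2 < U 0 ^ 2 * U 3} := by
      simp only [cs]
      exact Real.continuous_sqrt.comp_continuousOn
        ((continuousOn_const.mul (continuous_apply 2).continuousOn).div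
          (continuous_apply 3).continuousOn (fun U hU => hU.2.1.ne'))
    have hcs2ne : ∀ U ∈ {U : Fin 4 → ℝ | 0 < U 2 ∧ 0 < U 3 ∧ γ * U 2 < U 0 ^ 2 * U 3},
        cs γ U ^ 2 ≠ 0 := by
      intro U hU
      have hgt : 0 < γ * U 2 / U 3 := div_pos (mul_pos hγ0 hU.1) hU.2.1
      rw [cs, Real.sq_sqrt hgt.le]
      exact hgt.ne'
    have hrt1c : ContinuousOn (rt1 γ)
        {U : Fin 4 → ℝ | 0 < U 2 ∧ 0 < U 3 ∧ γ * U 2 < U 0 ^ 2 * U 3} := by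
      apply continuousOn_pi.2
      intro i
      fin_cases i
      · simp [rt1]; exact hlam1c.neg
      · simpa [rt1] using (continuousOn_const :
          ContinuousOn (fun _ : Fin 4 → ℝ => (1:ℝ)) _)
      · simp [rt1]; exact (continuous_apply 3).continuousOn.mul
          ((hlam1c.mul (continuous_apply 0).continuousOn).sub (continuous_apply 1).continuousOn)
      · simp [rt1]; exact ((continuous_apply 3).continuousOn.mul
          ((hlam1c.mul (continuous_apply 0).continuousOn).sub
            (continuous_apply 1).continuousOn)).div (hcsc.pow 2) hcs2ne
    have hrt4c : ContinuousOn (rt4 γ)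
        {U : Fin 4 → ℝ | 0 < U 2 ∧ 0 < U 3 ∧ γ * U 2 < U 0 ^ 2 * U 3} := by
      apply continuousOn_pi.2
      intro i
      fin_cases i
      · simp [rt4]; exact hlam4c.neg
      · simpa [rt4] using (continuousOn_const :
          ContinuousOn (fun _ : Fin 4 → ℝ => (1:ℝ)) _)
      · simp [rt4]; exact (continuous_apply 3).continuousOn.mul
          ((hlam4c.mul (continuous_apply 0).continuousOn).sub (continuous_apply 1).continuousOn)
      · simp [rt4]; exact ((continuous_apply 3).continuousOn.mul
          ((hlam4c.mul (continuous_apply 0).continuousOn).sub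
            (continuous_apply 1).continuousOn)).div (hcsc.pow 2) hcs2ne
    have hF1c : ContinuousAt (fun U => fderiv ℝ (lam1 γ) U (rt1 γ U)) ![u₀, 0, p₀, ρ₀] := by
      have hG : ContinuousAt (fun U => fderiv ℝ (fgen γ (-1)) U (rt1 γ U)) ![u₀, 0, p₀, ρ₀] :=
        ((hfc (-1)).clm_apply hrt1c).continuousAt (hSopen.mem_nhds hVS)
      apply hG.congr
      filter_upwards [hs'open.mem_nhds hVmem'] with U hU
      rw [(Filter.eventuallyEq_of_mem (hs'open.mem_nhds hU)
        (fun U' hU' => lam1_eq_fgen γ U' hU'.1 hU'.2 hγ0)).fderiv_eq]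
    have hF4c : ContinuousAt (fun U => fderiv ℝ (lam4 γ) U (rt4 γ U)) ![u₀, 0, p₀, ρ₀] := by
      have hG : ContinuousAt (fun U => fderiv ℝ (fgen γ 1) U (rt4 γ U)) ![u₀, 0, p₀, ρ₀] :=
        ((hfc 1).clm_apply hrt4c).continuousAt (hSopen.mem_nhds hVS)
      apply hG.congr
      filter_upwards [hs'open.mem_nhds hVmem'] with U hU
      rw [(Filter.eventuallyEq_of_mem (hs'open.mem_nhds hU)
        (fun U' hU' => lam4_eq_fgen γ U' hU'.1 hU'.2 hγ0)).fderiv_eq]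
    have hpos1 : 0 < fderiv ℝ (lam1 γ) ![u₀, 0, p₀, ρ₀] (rt1 γ ![u₀, 0, p₀, ρ₀]) := by
      rw [hv1]; exact hApos
    have hpos4 : 0 < fderiv ℝ (lam4 γ) ![u₀, 0, p₀, ρ₀] (rt4 γ ![u₀, 0, p₀, ρ₀]) := by
      rw [hv4]; exact hApos
    have hmem1 : {U : Fin 4 → ℝ | 0 < fderiv ℝ (lam1 γ) U (rt1 γ U)}
        ∈ nhds (![u₀, 0, p₀, ρ₀] : Fin 4 → ℝ) :=
      hF1c (Ioi_mem_nhds hpos1)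
    have hmem4 : {U : Fin 4 → ℝ | 0 < fderiv ℝ (lam4 γ) U (rt4 γ U)}
        ∈ nhds (![u₀, 0, p₀, ρ₀] : Fin 4 → ℝ) :=
      hF4c (Ioi_mem_nhds hpos4)
    obtain ⟨t, hts, htop, htV⟩ := mem_nhds_iff.1 (Filter.inter_mem hmem1 hmem4)
    exact ⟨t, htop, htV, fun U hU => hts hU⟩
end
end

section
/- Velocity bounds across a strong shock: let γ>1, let ρ_b, ρ₁ > 0, u_b, u₁ > 0, p₁ > p_b > 0, and let c₁ = √(γp₁/ρ₁) with u₁ > c₁. Suppose there are reals σ ≠ 0 and v_b such that σ·(ρ_b u_b − ρ₁ u₁) = ρ_b v_b and σ·(ρ_b u_b² − ρ₁ u₁² + p_b − p₁) = ρ_b v_b u_b. Then u₁ < u_b < (1 + 1/γ)·u₁. In particular p₁ − p_b = ρ₁ u₁ (u_b − u₁). -/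
noncomputable section

/-- Velocity bounds across a strong shock: from the first two Rankine–Hugoniot conditions
between `U_b = (u_b, v_b, p_b, ρ_b)` and `U₁ = (u₁, 0, p₁, ρ₁)` with `p₁ > p_b` and
`u₁ > c₁`, one gets `u₁ < u_b < (1 + 1/γ) u₁` and `p₁ - p_b = ρ₁ u₁ (u_b - u₁)`. -/
theorem strong_shock_velocity_bounds
    (γ ρ_b ρ₁ u_b u₁ p_b p₁ c₁ σ v_b : ℝ)
    (hγ : 1 < γ) (hρb : 0 < ρ_b) (hρ1 : 0 < ρ₁) (hub : 0 < u_b) (hu1 : 0 < u₁)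
    (hpb : 0 < p_b) (hpp : p_b < p₁)
    (hc : c₁ = Real.sqrt (γ * p₁ / ρ₁)) (hsup : c₁ < u₁) (hσ : σ ≠ 0)
    (h1 : σ * (ρ_b * u_b - ρ₁ * u₁) = ρ_b * v_b)
    (h2 : σ * (ρ_b * u_b ^ 2 - ρ₁ * u₁ ^ 2 + p_b - p₁) = ρ_b * v_b * u_b) :
    u₁ < u_b ∧ u_b < (1 + 1 / γ) * u₁ ∧ p₁ - p_b = ρ₁ * u₁ * (u_b - u₁) := by
  -- Substitute h1 into h2 and cancel σ to obtain the pressure jump relation.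
  have key : p₁ - p_b = ρ₁ * u₁ * (u_b - u₁) := by
    have h3 : σ * (ρ_b * u_b ^ 2 - ρ₁ * u₁ ^ 2 + p_b - p₁)
        = σ * (ρ_b * u_b - ρ₁ * u₁) * u_b := by rw [h1]; linarith [h2]
    have h4 : σ * ((p₁ - p_b) - ρ₁ * u₁ * (u_b - u₁)) = 0 := by ring_nf; ring_nf at h3; linarith
    have := mul_eq_zero.mp h4
    rcases this with h | h
    · exact absurd h hσ
    · linarith
  have hρu : 0 < ρ₁ * u₁ := mul_pos hρ1 hu1
  have hlow : u₁ < u_b := by nlinarith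
  refine ⟨hlow, ?_, key⟩
  -- u₁² > c₁² = γ p₁ / ρ₁
  have hc2 : c₁ ^ 2 = γ * p₁ / ρ₁ := by
    rw [hc, sq, Real.mul_self_sqrt]
    have h0 : 0 < p₁ := lt_trans hpb hpp
    positivity
  have hc0 : 0 ≤ c₁ := hc ▸ Real.sqrt_nonneg _
  have hu2 : γ * p₁ / ρ₁ < u₁ ^ 2 := by
    rw [← hc2]; nlinarith
  have hγ0 : (0:ℝ) < γ := by linarith
  have hgp : γ * p₁ < ρ₁ * u₁ ^ 2 := by
    have := (div_lt_iff₀ hρ1).mp hu2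
    linarith
  -- u_b - u₁ = (p₁ - p_b)/(ρ₁ u₁) < p₁/(ρ₁ u₁) < u₁/γ
  have : γ * (ρ₁ * u₁ * (u_b - u₁)) < ρ₁ * u₁ * u₁ := by
    nlinarith
  have hfin : u_b - u₁ < u₁ / γ := by
    rw [lt_div_iff₀ hγ0]
    nlinarith
  have : (1 + 1/γ) * u₁ = u₁ + u₁ / γ := by field_simp
  linarith
end
end

section
/- Nondegeneracy determinant for interactions with the strong vortex sheet/entropy wave: let γ>1, let U₁=(u₁,0,p₁,ρ₁) with ρ₁>0, p₁>0, u₁>c₁ where c₁=√(γp₁/ρ₁); let σ₂₀,σ₃₀ ∈ ℝ and set U₂ := (u₁e^{σ₂₀}, 0, p₁, ρ₁e^{σ₃₀}), and assume u₁e^{σ₂₀} > c₂ where c₂=√(γp₁/(ρ₁e^{σ₃₀})). Then det( r̃₄(U₂), ∂_{σ₃}G(σ₃₀,σ₂₀,U₁), ∂_{σ₂}G(σ₃₀,σ₂₀,U₁), D_U G(σ₃₀,σ₂₀,U₁)·r̃₁(U₁) ) = ρ₁² u₁² e^{σ₂₀+σ₃₀} ( λ₄(U₂) e^{2σ₂₀+σ₃₀}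 + λ₄(U₁) ) > 0, where λ₄(U)=c/√(u²−c²) at a state with v=0, r̃_j(U)=(−λ_j,1,ρλ_j u,ρλ_j u/c²) for j=1,4 and λ₁=−λ₄ at such states. -/
noncomputable section

/-- Fourth characteristic speed `λ₄(U) = c/√(u² - c²)` at a state with `v = 0`. -/
def lam4z (γ : ℝ) (U : Fin 4 → ℝ) : ℝ :=
  cs γ U / Real.sqrt (U 0 ^ 2 - cs γ U ^ 2)

/-- Unnormalized eigenvector `r̃₄(U) = (-λ₄, 1, ρλ₄u, ρλ₄u/c²)` at a state with `v = 0`. -/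
def rt4z (γ : ℝ) (U : Fin 4 → ℝ) : Fin 4 → ℝ :=
  ![-(lam4z γ U), 1, U 3 * lam4z γ U * U 0, U 3 * lam4z γ U * U 0 / cs γ U ^ 2]

/-- Unnormalized eigenvector `r̃₁(U) = (-λ₁, 1, ρλ₁u, ρλ₁u/c²)` with `λ₁ = -λ₄`
at a state with `v = 0`. -/
def rt1z (γ : ℝ) (U : Fin 4 → ℝ) : Fin 4 → ℝ :=
  ![lam4z γ U, 1, -(U 3 * lam4z γ U * U 0), -(U 3 * lam4z γ U * U 0) / cs γ U ^ 2]

/-- The 4×4 matrix whose columns are the listed vectors. -/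
def colMat (a b c d : Fin 4 → ℝ) : Matrix (Fin 4) (Fin 4) ℝ :=
  Matrix.of fun i j => ![a, b, c, d] j i

theorem my_det_fin_four (M : Matrix (Fin 4) (Fin 4) ℝ) :
    M.det =
      M 0 0 * M 1 1 * M 2 2 * M 3 3 - M 0 0 * M 1 1 * M 2 3 * M 3 2 -
        M 0 0 * M 1 2 * M 2 1 * M 3 3 + M 0 0 * M 1 2 * M 2 3 * M 3 1 +
        M 0 0 * M 1 3 * M 2 1 * M 3 2 - M 0 0 * M 1 3 * M 2 2 * M 3 1 -
        M 0 1 * M 1 0 * M 2 2 * M 3 3 + M 0 1 * M 1 0 * M 2 3 * M 3 2 +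
        M 0 1 * M 1 2 * M 2 0 * M 3 3 - M 0 1 * M 1 2 * M 2 3 * M 3 0 -
        M 0 1 * M 1 3 * M 2 0 * M 3 2 + M 0 1 * M 1 3 * M 2 2 * M 3 0 +
        M 0 2 * M 1 0 * M 2 1 * M 3 3 - M 0 2 * M 1 0 * M 2 3 * M 3 1 -
        M 0 2 * M 1 1 * M 2 0 * M 3 3 + M 0 2 * M 1 1 * M 2 3 * M 3 0 +
        M 0 2 * M 1 3 * M 2 0 * M 3 1 - M 0 2 * M 1 3 * M 2 1 * M 3 0 -
        M 0 3 * M 1 0 * M 2 1 * M 3 2 + M 0 3 * M 1 0 * M 2 2 * M 3 1 +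
        M 0 3 * M 1 1 * M 2 0 * M 3 2 - M 0 3 * M 1 1 * M 2 2 * M 3 0 -
        M 0 3 * M 1 2 * M 2 0 * M 3 1 + M 0 3 * M 1 2 * M 2 1 * M 3 0 := by
  rw [show M = Matrix.of ![![M 0 0, M 0 1, M 0 2, M 0 3], ![M 1 0, M 1 1, M 1 2, M 1 3],
      ![M 2 0, M 2 1, M 2 2, M 2 3], ![M 3 0, M 3 1, M 3 2, M 3 3]] from by
    ext i j; fin_cases i <;> fin_cases j <;> rfl]
  rw [Matrix.det_succ_row_zero]
  simp [Fin.sum_univ_four, Matrix.det_fin_three, Fin.succAbove, Fin.castSucc,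
    Fin.castAdd, Fin.castLE, Fin.succ, pow_succ, show ((3:Fin 4):ℕ)=3 from rfl]
  ring

/-- Nondegeneracy determinant for interactions of weak waves with the strong vortex
sheet/entropy wave: `det(r̃₄(U₂), ∂_{σ₃}G, ∂_{σ₂}G, D_U G · r̃₁(U₁))
= ρ₁²u₁²e^{σ₂₀+σ₃₀}(λ₄(U₂)e^{2σ₂₀+σ₃₀} + λ₄(U₁)) > 0`. -/
theorem vortex_det_pos
    (γ u₁ p₁ ρ₁ σ₂₀ σ₃₀ : ℝ) (hγ : 1 < γ) (hρ1 : 0 < ρ₁) (hp1 : 0 < p₁)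
    (c₁ : ℝ) (hc₁ : c₁ = Real.sqrt (γ * p₁ / ρ₁)) (hsup1 : c₁ < u₁)
    (U₁ U₂ : Fin 4 → ℝ) (hU₁ : U₁ = ![u₁, 0, p₁, ρ₁])
    (hU₂ : U₂ = ![u₁ * Real.exp σ₂₀, 0, p₁, ρ₁ * Real.exp σ₃₀])
    (c₂ : ℝ) (hc₂ : c₂ = Real.sqrt (γ * p₁ / (ρ₁ * Real.exp σ₃₀)))
    (hsup2 : c₂ < u₁ * Real.exp σ₂₀) :
    (colMat
        (rt4z γ U₂)
        ![0, 0, 0, ρ₁ * Real.exp σ₃₀]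
        ![u₁ * Real.exp σ₂₀, 0, 0, 0]
        ((Matrix.diagonal ![Real.exp σ₂₀, Real.exp σ₂₀, 1, Real.exp σ₃₀]).mulVec
          (rt1z γ U₁))).det =
      ρ₁ ^ 2 * u₁ ^ 2 * Real.exp (σ₂₀ + σ₃₀) *
        (lam4z γ U₂ * Real.exp (2 * σ₂₀ + σ₃₀) + lam4z γ U₁) ∧
    0 < (colMat
        (rt4z γ U₂)
        ![0, 0, 0, ρ₁ * Real.exp σ₃₀]
        ![u₁ * Real.exp σ₂₀, 0, 0, 0]
        ((Matrix.diagonal ![Real.exp σ₂₀, Real.exp σ₂₀, 1, Real.exp σ₃₀]).mulVec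
          (rt1z γ U₁))).det := by
  have hγ0 : (0:ℝ) < γ := lt_trans one_pos hγ
  have hc1pos : 0 < c₁ := by
    rw [hc₁]; exact Real.sqrt_pos.mpr (by positivity)
  have hc2pos : 0 < c₂ := by
    rw [hc₂]; exact Real.sqrt_pos.mpr (by positivity)
  have hu1 : 0 < u₁ := lt_trans hc1pos hsup1
  have hcs1 : cs γ U₁ = c₁ := by
    rw [hU₁, hc₁]; simp [cs]
  have hcs2 : cs γ U₂ = c₂ := by
    rw [hU₂, hc₂]; simp [cs]
  have hL1 : 0 < lam4z γ U₁ := by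
    rw [lam4z, hcs1]
    apply div_pos hc1pos
    apply Real.sqrt_pos.mpr
    rw [hU₁]
    simp only [Matrix.cons_val_zero]
    nlinarith
  have hL2 : 0 < lam4z γ U₂ := by
    rw [lam4z, hcs2]
    apply div_pos hc2pos
    apply Real.sqrt_pos.mpr
    rw [hU₂]
    simp only [Matrix.cons_val_zero]
    nlinarith [hc2pos, hsup2]
  have hdet : (colMat
        (rt4z γ U₂)
        ![0, 0, 0, ρ₁ * Real.exp σ₃₀]
        ![u₁ * Real.exp σ₂₀, 0, 0, 0]
        ((Matrix.diagonal ![Real.exp σ₂₀, Real.exp σ₂₀, 1, Real.exp σ₃₀]).mulVec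
          (rt1z γ U₁))).det =
      ρ₁ ^ 2 * u₁ ^ 2 * Real.exp (σ₂₀ + σ₃₀) *
        (lam4z γ U₂ * Real.exp (2 * σ₂₀ + σ₃₀) + lam4z γ U₁) := by
    rw [my_det_fin_four]
    simp only [colMat, Matrix.of_apply]
    simp [rt4z, rt1z, hU₁, hU₂, Matrix.mulVec_diagonal]
    have e1 : Real.exp (σ₂₀ + σ₃₀) = Real.exp σ₂₀ * Real.exp σ₃₀ := Real.exp_add _ _
    have e2 : Real.exp (2 * σ₂₀ + σ₃₀) = Real.exp σ₂₀ * Real.exp σ₂₀ * Real.exp σ₃₀ := by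
      rw [Real.exp_add, two_mul, Real.exp_add]
    rw [e1, e2]
    ring
  refine ⟨hdet, ?_⟩
  rw [hdet]
  have := Real.exp_pos (σ₂₀ + σ₃₀)
  have := Real.exp_pos (2 * σ₂₀ + σ₃₀)
  positivity
end
end

section
/- The reflection coefficient at the strong vortex sheet/entropy wave is strictly less than 1: in the setting where U₁=(u₁,0,p₁,ρ₁) with ρ₁>0, p₁>0, u₁>c₁=√(γp₁/ρ₁), γ>1, σ₂₀,σ₃₀∈ℝ, U₂:=(u₁e^{σ₂₀},0,p₁,ρ₁e^{σ₃₀}) with u₁e^{σ₂₀}>c₂=√(γp₁/(ρ₁e^{σ₃₀})), one has det( r̃₄(U₂), ∂_{σ₃}G(σ₃₀,σ₂₀,U₁), ∂_{σ₂}G(σ₃₀,σ₂₀,U₁), D_U G(σ₃₀,σ₂₀,U₁)·r̃₄(U₁) ) = ρ₁² u₁² e^{σ₂₀+σ₃₀} ( λ₄(U₂) e^{2σ₂₀+σ₃₀} − λ₄(U₁) ), and consequently | det( r̃₄(U₂), ∂_{σ₃}G, ∂_{σ₂}G, D_U G·r̃₄(U₁) ) | < det( r̃₄(U₂), ∂_{σ₃}G,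 ∂_{σ₂}G, D_U G·r̃₁(U₁) ). -/
noncomputable section

/-- The reflection coefficient at the strong vortex sheet/entropy wave is strictly
less than 1: `det(r̃₄(U₂), ∂_{σ₃}G, ∂_{σ₂}G, D_U G · r̃₄(U₁))
= ρ₁²u₁²e^{σ₂₀+σ₃₀}(λ₄(U₂)e^{2σ₂₀+σ₃₀} - λ₄(U₁))`, whose absolute value is less than
`det(r̃₄(U₂), ∂_{σ₃}G, ∂_{σ₂}G, D_U G · r̃₁(U₁))`. -/
theorem vortex_reflection_lt_one
    (γ u₁ p₁ ρ₁ σ₂₀ σ₃₀ : ℝ) (hγ : 1 < γ) (hρ1 : 0 < ρ₁) (hp1 : 0 < p₁)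
    (c₁ : ℝ) (hc₁ : c₁ = Real.sqrt (γ * p₁ / ρ₁)) (hsup1 : c₁ < u₁)
    (U₁ U₂ : Fin 4 → ℝ) (hU₁ : U₁ = ![u₁, 0, p₁, ρ₁])
    (hU₂ : U₂ = ![u₁ * Real.exp σ₂₀, 0, p₁, ρ₁ * Real.exp σ₃₀])
    (c₂ : ℝ) (hc₂ : c₂ = Real.sqrt (γ * p₁ / (ρ₁ * Real.exp σ₃₀)))
    (hsup2 : c₂ < u₁ * Real.exp σ₂₀) :
    (colMat
        (rt4z γ U₂)
        ![0, 0, 0, ρ₁ * Real.exp σ₃₀]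
        ![u₁ * Real.exp σ₂₀, 0, 0, 0]
        ((Matrix.diagonal ![Real.exp σ₂₀, Real.exp σ₂₀, 1, Real.exp σ₃₀]).mulVec
          (rt4z γ U₁))).det =
      ρ₁ ^ 2 * u₁ ^ 2 * Real.exp (σ₂₀ + σ₃₀) *
        (lam4z γ U₂ * Real.exp (2 * σ₂₀ + σ₃₀) - lam4z γ U₁) ∧
    |(colMat
        (rt4z γ U₂)
        ![0, 0, 0, ρ₁ * Real.exp σ₃₀]
        ![u₁ * Real.exp σ₂₀, 0, 0, 0]
        ((Matrix.diagonal ![Real.exp σ₂₀, Real.exp σ₂₀, 1, Real.exp σ₃₀]).mulVec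
          (rt4z γ U₁))).det| <
      (colMat
        (rt4z γ U₂)
        ![0, 0, 0, ρ₁ * Real.exp σ₃₀]
        ![u₁ * Real.exp σ₂₀, 0, 0, 0]
        ((Matrix.diagonal ![Real.exp σ₂₀, Real.exp σ₂₀, 1, Real.exp σ₃₀]).mulVec
          (rt1z γ U₁))).det := by
  
  have hE2 : (0:ℝ) < Real.exp σ₂₀ := Real.exp_pos _
  have hE3 : (0:ℝ) < Real.exp σ₃₀ := Real.exp_pos _
  have hc1 : 0 < c₁ := by rw [hc₁]; exact Real.sqrt_pos.mpr (by positivity)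
  have hc2 : 0 < c₂ := by rw [hc₂]; exact Real.sqrt_pos.mpr (by positivity)
  have hu1 : 0 < u₁ := hc1.trans hsup1
  have hcs1 : cs γ U₁ = c₁ := by rw [hU₁, hc₁]; simp [cs]
  have hcs2 : cs γ U₂ = c₂ := by rw [hU₂, hc₂]; simp [cs]
  have hL1 : 0 < lam4z γ U₁ := by
    rw [lam4z, hcs1]
    have : (0:ℝ) < U₁ 0 ^ 2 - c₁ ^ 2 := by
      rw [hU₁]; simp only [Matrix.cons_val_zero]
      nlinarith [hc1.le, hsup1]
    exact div_pos hc1 (Real.sqrt_pos.mpr this)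
  have hL2 : 0 < lam4z γ U₂ := by
    rw [lam4z, hcs2]
    have : (0:ℝ) < U₂ 0 ^ 2 - c₂ ^ 2 := by
      rw [hU₂]; simp only [Matrix.cons_val_zero]
      nlinarith [hc2.le, hsup2]
    exact div_pos hc2 (Real.sqrt_pos.mpr this)
  have hU₁0 : U₁ 0 = u₁ := by rw [hU₁]; rfl
  have hU₁3 : U₁ 3 = ρ₁ := by rw [hU₁]; rfl
  have hU₂0 : U₂ 0 = u₁ * Real.exp σ₂₀ := by rw [hU₂]; rfl
  have hU₂3 : U₂ 3 = ρ₁ * Real.exp σ₃₀ := by rw [hU₂]; rfl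
  have hc1ne : c₁ ≠ 0 := ne_of_gt hc1
  have hc2ne : c₂ ≠ 0 := ne_of_gt hc2
  have hdet1 : (colMat
        (rt4z γ U₂)
        ![0, 0, 0, ρ₁ * Real.exp σ₃₀]
        ![u₁ * Real.exp σ₂₀, 0, 0, 0]
        ((Matrix.diagonal ![Real.exp σ₂₀, Real.exp σ₂₀, 1, Real.exp σ₃₀]).mulVec
          (rt4z γ U₁))).det =
      ρ₁ ^ 2 * u₁ ^ 2 * Real.exp (σ₂₀ + σ₃₀) *
        (lam4z γ U₂ * Real.exp (2 * σ₂₀ + σ₃₀) - lam4z γ U₁) := by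
    rw [Real.exp_add, show (2:ℝ) * σ₂₀ + σ₃₀ = σ₂₀ + σ₂₀ + σ₃₀ by ring, Real.exp_add,
      Real.exp_add]
    simp [colMat, rt4z, hcs1, hcs2, hU₁0, hU₁3, hU₂0, hU₂3, Matrix.mulVec_diagonal,
      Matrix.det_succ_row_zero, Fin.sum_univ_succ, Fin.succAbove, Fin.castSucc, Fin.castAdd,
      Fin.castLE, Fin.succ]
    ring
  have hdet2 : (colMat
        (rt4z γ U₂)
        ![0, 0, 0, ρ₁ * Real.exp σ₃₀]
        ![u₁ * Real.exp σ₂₀, 0, 0, 0]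
        ((Matrix.diagonal ![Real.exp σ₂₀, Real.exp σ₂₀, 1, Real.exp σ₃₀]).mulVec
          (rt1z γ U₁))).det =
      ρ₁ ^ 2 * u₁ ^ 2 * Real.exp (σ₂₀ + σ₃₀) *
        (lam4z γ U₂ * Real.exp (2 * σ₂₀ + σ₃₀) + lam4z γ U₁) := by
    rw [Real.exp_add, show (2:ℝ) * σ₂₀ + σ₃₀ = σ₂₀ + σ₂₀ + σ₃₀ by ring, Real.exp_add,
      Real.exp_add]
    simp [colMat, rt4z, rt1z, hcs1, hcs2, hU₁0, hU₁3, hU₂0, hU₂3, Matrix.mulVec_diagonal,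
      Matrix.det_succ_row_zero, Fin.sum_univ_succ, Fin.succAbove, Fin.castSucc, Fin.castAdd,
      Fin.castLE, Fin.succ]
    ring
  refine ⟨hdet1, ?_⟩
  rw [hdet1, hdet2]
  have hK : (0:ℝ) < ρ₁ ^ 2 * u₁ ^ 2 * Real.exp (σ₂₀ + σ₃₀) := by positivity
  have hE : (0:ℝ) < Real.exp (2 * σ₂₀ + σ₃₀) := Real.exp_pos _
  rw [abs_lt]
  constructor <;> nlinarith [mul_pos hL2 hE, hL1, hK]
end
end
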